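/- Assume T_h^+ and T_h^- both have positive Lebesgue measure. Then there exists exactly one pair of affine functions (φ_J^+, φ_J^-) on ℝ^N such that: φ_J^+ = φ_J^- on H; (∇φ_J^+ − ∇φ_J^-)·n = 1; and the piecewise function φ_J (equal to φ_J^± on T_h^±) has vanishing average over every face F_i, i = 1,…,N+1. Moreover this pair is given explicitly by φ_J^+ = d_H − Π_T w and φ_J^- = −Π_T w, where d_H(x) = (x − x_0)·n; i.e., φ_J = w − Π_T w on T. -/

import Mathlib

open MeasureTheory Metric Set
open scoped RealInnerProductSpace

noncomputable section

/-- Euclidean space `ℝ^N`. -/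
abbrev Euc (N : ℕ) := EuclideanSpace ℝ (Fin N)

/-- The average of `f` over a set `S` with respect to the `(N-1)`-dimensional
Hausdorff measure: `(1/|S|) ∫_S f dH^{N-1}`. -/
noncomputable def faceAvg {N : ℕ} (S : Set (Euc N)) (f : Euc N → ℝ) : ℝ :=
  (μH[(N : ℝ) - 1] S).toReal⁻¹ * ∫ x in S, f x ∂(μH[(N : ℝ) - 1])

/-- Evaluation of the affine function with gradient `p.1` and constant `p.2`. -/
noncomputable def affEval {N : ℕ} (p : Euc N × ℝ) (x : Euc N) : ℝ := ⟪p.1, x⟫ + p.2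

/-- The function equal to `fp` on the positive side of the hyperplane through `x₀`
with normal `nv`, and to `fm` elsewhere. -/
noncomputable def pwFun {N : ℕ} (x₀ nv : Euc N) (fp fm : Euc N → ℝ) (x : Euc N) : ℝ :=
  if 0 < ⟪x - x₀, nv⟫ then fp x else fm x

lemma continuous_affEval {N : ℕ} (p : Euc N × ℝ) : Continuous (affEval p) := by
  unfold affEval
  exact (Continuous.inner continuous_const continuous_id).add continuous_const

lemma integrableOn_of_compact_aux {N : ℕ} {S : Set (Euc N)} (hS : IsCompact S)
    (hfin : μH[(N : ℝ) - 1] S ≠ ⊤) {f : Euc N → ℝ} (hf : Continuous f) :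
    IntegrableOn f S (μH[(N : ℝ) - 1]) := by
  obtain ⟨C, hC⟩ := hS.exists_bound_of_continuousOn hf.continuousOn
  exact Measure.integrableOn_of_bounded hfin hf.aestronglyMeasurable
    ((ae_restrict_iff' hS.measurableSet).mpr (ae_of_all _ hC))

/-- `affEval` as a linear map in the pair, for fixed `x`. -/
noncomputable def affLin {N : ℕ} (x : Euc N) : (Euc N × ℝ) →ₗ[ℝ] ℝ where
  toFun p := affEval p x
  map_add' p q := by
    simp only [affEval, Prod.fst_add, Prod.snd_add, inner_add_left]; ring
  map_smul' c p := by
    simp only [affEval, Prod.smul_fst, Prod.smul_snd, real_inner_smul_left, smul_eq_mul,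
      RingHom.id_apply]; ring

@[simp] lemma affLin_apply {N : ℕ} (x : Euc N) (p : Euc N × ℝ) :
    affLin x p = affEval p x := rfl

/-- `faceAvg S (affEval ·)` as a linear map, for a compact `S` of finite measure. -/
noncomputable def faceAvgLin {N : ℕ} (S : Set (Euc N)) (hS : IsCompact S)
    (hfin : μH[(N : ℝ) - 1] S ≠ ⊤) : (Euc N × ℝ) →ₗ[ℝ] ℝ where
  toFun p := faceAvg S (affEval p)
  map_add' p q := by
    have h1 : affEval (p + q) = fun x => affEval p x + affEval q x := by
      funext x
      simp only [affEval, Prod.fst_add, Prod.snd_add, inner_add_left]; ring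
    simp only [h1]
    unfold faceAvg
    rw [integral_add (integrableOn_of_compact_aux hS hfin (continuous_affEval p))
      (integrableOn_of_compact_aux hS hfin (continuous_affEval q)), mul_add]
  map_smul' c p := by
    have h1 : affEval (c • p) = fun x => c • affEval p x := by
      funext x
      simp only [affEval, Prod.smul_fst, Prod.smul_snd, real_inner_smul_left, smul_eq_mul]; ring
    simp only [h1, RingHom.id_apply]
    unfold faceAvg
    rw [integral_smul]
    simp only [smul_eq_mul]
    ring

@[simp] lemma faceAvgLin_apply {N : ℕ} (S : Set (Euc N)) (hS : IsCompact S)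
    (hfin : μH[(N : ℝ) - 1] S ≠ ⊤) (p : Euc N × ℝ) :
    faceAvgLin S hS hfin p = faceAvg S (affEval p) := rfl

/-- Existence, uniqueness and the explicit formula for the pair of affine functions
`(φ_J^+, φ_J^-)` agreeing on `H`, with unit jump of the normal derivative, and with
vanishing averages of the piecewise function over all faces:
`φ_J^+ = d_H - Π_T w`, `φ_J^- = -Π_T w`, i.e. `φ_J = w - Π_T w` on `T`. -/
theorem statement2
    (N : ℕ) (hN : N = 2 ∨ N = 3)
    (v : Fin (N + 1) → Euc N) (hv : AffineIndependent ℝ v)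
    (Tset : Set (Euc N)) (hTset : Tset = convexHull ℝ (Set.range v))
    (F : Fin (N + 1) → Set (Euc N))
    (hF : ∀ i, F i = convexHull ℝ (v '' ({i}ᶜ : Set (Fin (N + 1)))))
    (nv x₀ : Euc N) (hn : ‖nv‖ = 1)
    (Hpl : Set (Euc N)) (hH : Hpl = {x | ⟪x - x₀, nv⟫ = 0})
    (Tplus Tminus : Set (Euc N))
    (hTplus : Tplus = {x ∈ Tset | 0 < ⟪x - x₀, nv⟫})
    (hTminus : Tminus = {x ∈ Tset | ⟪x - x₀, nv⟫ < 0})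
    (hvolp : 0 < volume Tplus) (hvolm : 0 < volume Tminus)
    (w : Euc N → ℝ)
    (hw : ∀ x, w x = if 0 < ⟪x - x₀, nv⟫ then infDist x Hpl else 0)
    (lam : Fin (N + 1) → Euc N × ℝ)
    (hlam : ∀ i j, faceAvg (F j) (affEval (lam i)) = if i = j then (1 : ℝ) else 0)
    (PiTw : Euc N → ℝ)
    (hPiw : ∀ x, PiTw x = ∑ i, faceAvg (F i) w * affEval (lam i) x) :
    (∃! p : (Euc N × ℝ) × (Euc N × ℝ),
        (∀ x ∈ Hpl, affEval p.1 x = affEval p.2 x) ∧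
        ⟪p.1.1 - p.2.1, nv⟫ = 1 ∧
        (∀ j, faceAvg (F j) (pwFun x₀ nv (affEval p.1) (affEval p.2)) = 0)) ∧
    (∀ p : (Euc N × ℝ) × (Euc N × ℝ),
        ((∀ x ∈ Hpl, affEval p.1 x = affEval p.2 x) ∧
          ⟪p.1.1 - p.2.1, nv⟫ = 1 ∧
          (∀ j, faceAvg (F j) (pwFun x₀ nv (affEval p.1) (affEval p.2)) = 0)) →
        (∀ x, affEval p.1 x = ⟪x - x₀, nv⟫ - PiTw x) ∧
        (∀ x, affEval p.2 x = -(PiTw x)) ∧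
        (∀ x ∈ Tset, pwFun x₀ nv (affEval p.1) (affEval p.2) x = w x - PiTw x)) := by
  classical
  -- basic facts
  have hnn : ⟪nv, nv⟫ = 1 := by
    have h := real_inner_self_eq_norm_mul_norm nv
    rw [hn, mul_one] at h
    exact h
  have hx0 : x₀ ∈ Hpl := by rw [hH]; simp
  have hne : Hpl.Nonempty := ⟨x₀, hx0⟩
  -- distance to the hyperplane on the positive side
  have hdist : ∀ x : Euc N, 0 < ⟪x - x₀, nv⟫ → infDist x Hpl = ⟪x - x₀, nv⟫ := by
    intro x ht
    refine le_antisymm ?_ ?_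
    · have hy : x - ⟪x - x₀, nv⟫ • nv ∈ Hpl := by
        rw [hH]
        simp only [mem_setOf_eq]
        have h1 : x - ⟪x - x₀, nv⟫ • nv - x₀ = (x - x₀) - ⟪x - x₀, nv⟫ • nv := by abel
        rw [h1, inner_sub_left, real_inner_smul_left, hnn, mul_one, sub_self]
      calc infDist x Hpl ≤ dist x (x - ⟪x - x₀, nv⟫ • nv) := infDist_le_dist_of_mem hy
        _ = ⟪x - x₀, nv⟫ := by
          rw [dist_eq_norm]
          have h2 : x - (x - ⟪x - x₀, nv⟫ • nv) = ⟪x - x₀, nv⟫ • nv := by abel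
          rw [h2, norm_smul, hn, mul_one, Real.norm_eq_abs, abs_of_pos ht]
    · by_contra h
      push_neg at h
      obtain ⟨y, hy, hlt⟩ := (infDist_lt_iff hne).mp h
      have hy0 : ⟪y - x₀, nv⟫ = 0 := by rw [hH] at hy; exact hy
      have hle : ⟪x - x₀, nv⟫ ≤ dist x y := by
        have h1 : ⟪x - x₀, nv⟫ = ⟪x - y, nv⟫ := by
          have h2 : x - x₀ = (x - y) + (y - x₀) := by abel
          rw [h2, inner_add_left, hy0, add_zero]
        rw [h1, dist_eq_norm]
        calc ⟪x - y, nv⟫ ≤ ‖x - y‖ * ‖nv‖ := real_inner_le_norm _ _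
          _ = ‖x - y‖ := by rw [hn, mul_one]
      linarith
  -- w is a max, hence continuous
  have hwmax : ∀ x, w x = max ⟪x - x₀, nv⟫ 0 := by
    intro x
    rw [hw]
    by_cases ht : 0 < ⟪x - x₀, nv⟫
    · rw [if_pos ht, hdist x ht, max_eq_left ht.le]
    · rw [if_neg ht, max_eq_right (le_of_not_gt ht)]
  have hwcont : Continuous w := by
    have h1 : w = fun x => max ⟪x - x₀, nv⟫ 0 := funext hwmax
    rw [h1]
    exact ((Continuous.inner (continuous_id.sub continuous_const)
      continuous_const)).max continuous_const
  -- the faces have nonzero finite measure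
  have hμtR : ∀ j, (μH[(N : ℝ) - 1] (F j)).toReal ≠ 0 := by
    intro j h0
    have h1 := hlam j j
    rw [if_pos rfl] at h1
    unfold faceAvg at h1
    rw [h0, inv_zero, zero_mul] at h1
    exact zero_ne_one h1
  have hfin : ∀ j, μH[(N : ℝ) - 1] (F j) ≠ ⊤ :=
    fun j => (ENNReal.toReal_ne_zero.mp (hμtR j)).2
  have hcomp : ∀ j, IsCompact (F j) := by
    intro j
    rw [hF]
    exact ((Set.toFinite ({j}ᶜ : Set (Fin (N + 1)))).image v).isCompact_convexHull ℝ
  have hint : ∀ (j : Fin (N + 1)) (f : Euc N → ℝ), Continuous f →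
      IntegrableOn f (F j) (μH[(N : ℝ) - 1]) :=
    fun j f hf => integrableOn_of_compact_aux (hcomp j) (hfin j) hf
  have hadd : ∀ (j : Fin (N + 1)) (f g : Euc N → ℝ),
      IntegrableOn f (F j) (μH[(N : ℝ) - 1]) → IntegrableOn g (F j) (μH[(N : ℝ) - 1]) →
      faceAvg (F j) (fun x => f x + g x) = faceAvg (F j) f + faceAvg (F j) g := by
    intro j f g hf hg
    unfold faceAvg
    rw [integral_add hf hg, mul_add]
  -- the linear map p ↦ (faceAvg over faces)
  set Φ : (Euc N × ℝ) →ₗ[ℝ] (Fin (N + 1) → ℝ) :=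
    LinearMap.pi (fun j => faceAvgLin (F j) (hcomp j) (hfin j)) with hΦ
  have hΦapp : ∀ (p : Euc N × ℝ) (j : Fin (N + 1)),
      Φ p j = faceAvg (F j) (affEval p) := fun p j => rfl
  have hΦsum : ∀ (y : Fin (N + 1) → ℝ) (j : Fin (N + 1)),
      Φ (∑ i, y i • lam i) j = y j := by
    intro y j
    rw [map_sum]
    simp only [Finset.sum_apply]
    have h1 : ∀ i : Fin (N + 1), Φ (y i • lam i) j = y i * (if i = j then (1 : ℝ) else 0) := by
      intro i
      rw [Φ.map_smul]
      simp only [Pi.smul_apply, smul_eq_mul]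
      rw [hΦapp, hlam]
    rw [Finset.sum_congr rfl fun i _ => h1 i]
    simp
  have hsurj : Function.Surjective Φ := fun y => ⟨∑ i, y i • lam i, funext (hΦsum y)⟩
  have hdim : Module.finrank ℝ (Euc N × ℝ) = Module.finrank ℝ (Fin (N + 1) → ℝ) := by
    rw [Module.finrank_prod, finrank_euclideanSpace_fin, Module.finrank_self,
      Module.finrank_pi, Fintype.card_fin]
  have hinj : Function.Injective Φ :=
    (LinearMap.injective_iff_surjective_of_finrank_eq_finrank hdim).mpr hsurj
  -- the explicit minus-side pair
  set cw : Fin (N + 1) → ℝ := fun i => faceAvg (F i) w with hcw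
  set pm : Euc N × ℝ := -∑ i, cw i • lam i with hpm
  have hΦpm : ∀ j, Φ pm j = -(cw j) := by
    intro j
    rw [hpm, map_neg]
    simp only [Pi.neg_apply]
    rw [hΦsum]
  have hfapm : ∀ j, faceAvg (F j) (affEval pm) = -(cw j) := by
    intro j; rw [← hΦapp, hΦpm]
  have hpmval : ∀ x, affEval pm x = -(PiTw x) := by
    intro x
    have h1 : affEval pm x = affLin x pm := rfl
    rw [h1, hpm, map_neg, map_sum, hPiw]
    congr 1
    refine Finset.sum_congr rfl fun i _ => ?_
    rw [_root_.map_smul, smul_eq_mul, affLin_apply]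
  -- conditions (a), (b) determine the jump
  have hrel : ∀ p : (Euc N × ℝ) × (Euc N × ℝ),
      (∀ x ∈ Hpl, affEval p.1 x = affEval p.2 x) → ⟪p.1.1 - p.2.1, nv⟫ = 1 →
      p.1 = (p.2.1 + nv, p.2.2 - ⟪nv, x₀⟫) := by
    intro p ha hb
    have hd : ∀ x ∈ Hpl, ⟪p.1.1 - p.2.1, x⟫ + (p.1.2 - p.2.2) = 0 := by
      intro x hx
      have h1 := ha x hx
      simp only [affEval] at h1
      rw [inner_sub_left]
      linarith
    have hd0 : ⟪p.1.1 - p.2.1, x₀⟫ + (p.1.2 - p.2.2) = 0 := hd x₀ hx0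
    have hdz : ∀ z : Euc N, ⟪p.1.1 - p.2.1, z⟫ = ⟪z, nv⟫ := by
      intro z
      have hu : x₀ + (z - ⟪z, nv⟫ • nv) ∈ Hpl := by
        rw [hH]
        simp only [mem_setOf_eq]
        have h1 : x₀ + (z - ⟪z, nv⟫ • nv) - x₀ = z - ⟪z, nv⟫ • nv := by abel
        rw [h1, inner_sub_left, real_inner_smul_left, hnn, mul_one, sub_self]
      have h2 := hd _ hu
      rw [inner_add_right, inner_sub_right, real_inner_smul_right, hb, mul_one] at h2
      linarith
    have hdnv : p.1.1 - p.2.1 = nv := by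
      have h3 : ⟪p.1.1 - p.2.1 - nv, p.1.1 - p.2.1 - nv⟫ = 0 := by
        rw [inner_sub_left, hdz, real_inner_comm nv]
        ring
      rw [inner_self_eq_zero] at h3
      exact sub_eq_zero.mp h3
    have hc : p.1.2 = p.2.2 - ⟪nv, x₀⟫ := by
      rw [hdnv] at hd0
      linarith
    have h1 : p.1.1 = p.2.1 + nv := by
      rw [← hdnv]; abel
    exact Prod.ext h1 hc
  -- the affine relation between the two sides
  have haffrel : ∀ p : (Euc N × ℝ) × (Euc N × ℝ),
      p.1 = (p.2.1 + nv, p.2.2 - ⟪nv, x₀⟫) →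
      ∀ x, affEval p.1 x = affEval p.2 x + ⟪x - x₀, nv⟫ := by
    intro p hp x
    rw [hp]
    simp only [affEval]
    rw [inner_add_left, inner_sub_left, real_inner_comm nv x, real_inner_comm nv x₀]
    ring_nf
  have hpwrel : ∀ p : (Euc N × ℝ) × (Euc N × ℝ),
      (∀ x, affEval p.1 x = affEval p.2 x + ⟪x - x₀, nv⟫) →
      ∀ x, pwFun x₀ nv (affEval p.1) (affEval p.2) x = affEval p.2 x + w x := by
    intro p hp x
    unfold pwFun
    by_cases ht : 0 < ⟪x - x₀, nv⟫
    · rw [if_pos ht, hp x, hw x, if_pos ht, hdist x ht]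
    · rw [if_neg ht, hw x, if_neg ht, add_zero]
  -- characterization of any solution
  have hkey : ∀ p : (Euc N × ℝ) × (Euc N × ℝ),
      ((∀ x ∈ Hpl, affEval p.1 x = affEval p.2 x) ∧ ⟪p.1.1 - p.2.1, nv⟫ = 1 ∧
        (∀ j, faceAvg (F j) (pwFun x₀ nv (affEval p.1) (affEval p.2)) = 0)) →
      p.2 = pm ∧ p.1 = (pm.1 + nv, pm.2 - ⟪nv, x₀⟫) := by
    rintro p ⟨ha, hb, hc⟩
    have h1 := hrel p ha hb
    have h2 := haffrel p h1
    have h3 := hpwrel p h2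
    have h4 : ∀ j, faceAvg (F j) (affEval p.2) + faceAvg (F j) w = 0 := by
      intro j
      have h5 := hc j
      rw [show (pwFun x₀ nv (affEval p.1) (affEval p.2)) = fun x => affEval p.2 x + w x
        from funext h3] at h5
      rw [hadd j _ _ (hint j _ (continuous_affEval p.2)) (hint j _ hwcont)] at h5
      exact h5
    have h5 : Φ p.2 = Φ pm := by
      funext j
      rw [hΦapp, hΦpm]
      have h6 := h4 j
      have h7 : cw j = faceAvg (F j) w := rfl
      rw [h7]
      linarith
    have h6 : p.2 = pm := hinj h5
    refine ⟨h6, ?_⟩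
    rw [h1, h6]
  -- the explicit pair
  set p₀ : (Euc N × ℝ) × (Euc N × ℝ) := ((pm.1 + nv, pm.2 - ⟪nv, x₀⟫), pm) with hp₀
  have hp₀rel : p₀.1 = (p₀.2.1 + nv, p₀.2.2 - ⟪nv, x₀⟫) := rfl
  have hp₀aff : ∀ x, affEval p₀.1 x = affEval p₀.2 x + ⟪x - x₀, nv⟫ := haffrel p₀ hp₀rel
  have hp₀pw : ∀ x, pwFun x₀ nv (affEval p₀.1) (affEval p₀.2) x = affEval p₀.2 x + w x :=
    hpwrel p₀ hp₀aff
  have hcond₀ : (∀ x ∈ Hpl, affEval p₀.1 x = affEval p₀.2 x) ∧ ⟪p₀.1.1 - p₀.2.1, nv⟫ = 1 ∧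
      (∀ j, faceAvg (F j) (pwFun x₀ nv (affEval p₀.1) (affEval p₀.2)) = 0) := by
    refine ⟨?_, ?_, ?_⟩
    · intro x hx
      rw [hH] at hx
      rw [hp₀aff x, hx, add_zero]
    · show ⟪pm.1 + nv - pm.1, nv⟫ = 1
      rw [show pm.1 + nv - pm.1 = nv from by abel, hnn]
    · intro j
      rw [show (pwFun x₀ nv (affEval p₀.1) (affEval p₀.2)) = fun x => affEval p₀.2 x + w x
        from funext hp₀pw]
      rw [hadd j _ _ (hint j _ (continuous_affEval p₀.2)) (hint j _ hwcont)]
      have h1 : faceAvg (F j) (affEval p₀.2) = -(cw j) := hfapm j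
      have h2 : cw j = faceAvg (F j) w := rfl
      rw [h1, h2]
      ring
  constructor
  · refine ⟨p₀, hcond₀, ?_⟩
    intro q hq
    obtain ⟨h2, h1⟩ := hkey q hq
    exact Prod.ext h1 h2
  · intro p hp
    obtain ⟨h2, h1⟩ := hkey p hp
    have hprel : p.1 = (p.2.1 + nv, p.2.2 - ⟪nv, x₀⟫) := by rw [h2]; exact h1
    have haff2 : ∀ x, affEval p.2 x = -(PiTw x) := by
      intro x; rw [h2]; exact hpmval x
    have haff1 : ∀ x, affEval p.1 x = ⟪x - x₀, nv⟫ - PiTw x := by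
      intro x
      rw [haffrel p hprel x, haff2 x]
      ring
    refine ⟨haff1, haff2, fun x _ => ?_⟩
    rw [hpwrel p (haffrel p hprel) x, haff2 x]
    ring
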